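/- Let n be a natural number with n ≡ 3 (mod 8). Define rational numbers c_k for 0 ≤ k ≤ ⌊n/2⌋ by: c_0 = −1, and for 1 ≤ k ≤ ⌊n/2⌋, c_k = (−1)^(⌊k/2⌋ + ((k−1) mod 2)) · (n+1) · (n + 1 − 2k)^((k−1) mod 2) · (∏_{λ=1}^{⌊(k−1)/2⌋} ((n+1)² − (4λ)²)) / (4^k · k!) (the product being empty, hence 1, when ⌊(k−1)/2⌋ = 0). Then every c_k is an integer, and for all complex numbers x, y: x^n + y^n = (x + y) · ∑_{k=0}^{⌊n/2⌋} c_k · (x·y)^(⌊n/2⌋ − k) · (x² + y²)^k. -/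

import Mathlib

/-- The true integer coefficients in the expansion of `(x^(2m+1)+y^(2m+1))/(x+y)`
in terms of `xy` and `x^2+y^2`. -/
def auxD (m k : ℕ) : ℤ := (-1) ^ ((m + 1 - k) / 2) * ((m + k) / 2).choose k

lemma auxD_vanish (m k : ℕ) (h : m < k) : auxD m k = 0 := by
  unfold auxD
  rw [Nat.choose_eq_zero_of_lt (by omega)]
  simp

lemma auxD_zero_step (m : ℕ) : auxD (m+2) 0 = - auxD m 0 := by
  unfold auxD
  rw [show (m+2+1-0)/2 = (m+1-0)/2 + 1 by omega]
  simp [pow_succ]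

lemma auxD_rec (m k : ℕ) : auxD (m+2) (k+1) = auxD (m+1) k - auxD m (k+1) := by
  unfold auxD
  rcases le_or_gt k (m+1) with h | h
  · rcases Nat.even_or_odd (m + k) with he | he
    · obtain ⟨b, hb⟩ : ∃ b, m = k + 2*b := by
        rcases he with ⟨a, ha⟩; exact ⟨(m-k)/2, by omega⟩
      rw [show (m+2+1-(k+1))/2 = b+1 by omega, show (m+2+(k+1))/2 = (k+b)+1 by omega,
          show (m+1+1-k)/2 = b+1 by omega, show (m+1+k)/2 = k+b by omega,
          show (m+1-(k+1))/2 = b by omega, show (m+(k+1))/2 = k+b by omega,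
          Nat.choose_succ_succ (k+b) k]
      push_cast
      ring
    · rcases le_or_gt k m with hk | hk
      · obtain ⟨b, hb⟩ : ∃ b, m = k + 2*b + 1 := by
          rcases he with ⟨a, ha⟩; exact ⟨(m-k-1)/2, by omega⟩
        rw [show (m+2+1-(k+1))/2 = b+1 by omega, show (m+2+(k+1))/2 = (k+b+1)+1 by omega,
            show (m+1+1-k)/2 = b+1 by omega, show (m+1+k)/2 = k+b+1 by omega,
            show (m+1-(k+1))/2 = b by omega, show (m+(k+1))/2 = k+b+1 by omega,
            Nat.choose_succ_succ (k+b+1) k]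
        push_cast
        ring
      · have hk1 : k = m+1 := by omega
        subst hk1
        rw [show (m+2+1-(m+1+1))/2 = 0 by omega, show (m+2+(m+1+1))/2 = m+2 by omega,
            show (m+1+1-(m+1))/2 = 0 by omega, show (m+1+(m+1))/2 = m+1 by omega,
            show (m+1-(m+1+1))/2 = 0 by omega, show (m+(m+1+1))/2 = m+1 by omega,
            Nat.choose_self, Nat.choose_self, Nat.choose_eq_zero_of_lt (by omega)]
        simp
  · rw [Nat.choose_eq_zero_of_lt (show (m+2+(k+1))/2 < k+1 by omega),
        Nat.choose_eq_zero_of_lt (show (m+1+k)/2 < k by omega),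
        Nat.choose_eq_zero_of_lt (show (m+(k+1))/2 < k+1 by omega)]
    simp

noncomputable def auxS (m : ℕ) (x y : ℂ) : ℂ :=
  ∑ k ∈ Finset.range (m+1), (auxD m k : ℂ) * (x*y)^(m-k) * (x^2+y^2)^k

lemma auxS_rec (m : ℕ) (x y : ℂ) :
    auxS (m+2) x y = (x^2+y^2) * auxS (m+1) x y - (x*y)^2 * auxS m x y := by
  unfold auxS
  rw [Finset.mul_sum, Finset.mul_sum,
     Finset.sum_range_succ' (fun k => (auxD (m+2) k : ℂ) * (x*y)^(m+2-k) * (x^2+y^2)^k) (m+2),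
     Finset.sum_range_succ' (fun k => (x*y)^2 * ((auxD m k : ℂ) * (x*y)^(m-k) * (x^2+y^2)^k)) m]
  have hext : ∑ k ∈ Finset.range m,
        (x*y)^2 * ((auxD m (k+1) : ℂ) * (x*y)^(m-(k+1)) * (x^2+y^2)^(k+1))
      = ∑ k ∈ Finset.range (m+2),
        (x*y)^2 * ((auxD m (k+1) : ℂ) * (x*y)^(m-(k+1)) * (x^2+y^2)^(k+1)) := by
    rw [Finset.sum_range_succ, Finset.sum_range_succ,
        auxD_vanish m (m+1) (by omega), auxD_vanish m (m+1+1) (by omega)]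
    simp
  rw [hext]
  have key : ∀ k ∈ Finset.range (m+2),
      (auxD (m+2) (k+1) : ℂ) * (x*y)^(m+2-(k+1)) * (x^2+y^2)^(k+1)
      = (x^2+y^2) * ((auxD (m+1) k : ℂ) * (x*y)^(m+1-k) * (x^2+y^2)^k)
        - (x*y)^2 * ((auxD m (k+1) : ℂ) * (x*y)^(m-(k+1)) * (x^2+y^2)^(k+1)) := by
    intro k hk
    rw [auxD_rec]
    rcases le_or_gt (k+1) m with h | h
    · have e1 : m+2-(k+1) = (m-(k+1)) + 2 := by omega
      have e2 : m+1-k = (m-(k+1)) + 2 := by omega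
      rw [e1, e2]
      push_cast
      ring
    · have hz : auxD m (k+1) = 0 := auxD_vanish m (k+1) (by omega)
      have e2 : m+1-k = m+2-(k+1) := by omega
      rw [hz, e2]
      push_cast
      ring
  rw [Finset.sum_congr rfl key, Finset.sum_sub_distrib]
  have h0 : (auxD (m+2) 0 : ℂ) = -(auxD m 0 : ℂ) := by
    rw [auxD_zero_step]; push_cast; ring
  rw [h0]
  simp only [Nat.sub_zero, pow_zero, mul_one]
  ring

lemma aux_main (m : ℕ) (x y : ℂ) :
    x^(2*m+1) + y^(2*m+1) = (x+y) * auxS m x y := by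
  induction m using Nat.strong_induction_on with
  | _ m ih =>
    match m with
    | 0 => simp [auxS, auxD]
    | 1 =>
      have : auxS 1 x y = (auxD 1 0 : ℂ) * (x*y) + (auxD 1 1 : ℂ) * (x^2+y^2) := by
        simp [auxS, Finset.sum_range_succ]
      rw [this]
      have h0 : auxD 1 0 = -1 := by decide
      have h1 : auxD 1 1 = 1 := by decide
      rw [h0, h1]
      push_cast
      ring
    | (m+2) =>
      have h1 := ih (m+1) (by omega) 
      have h0 := ih m (by omega)
      rw [auxS_rec]
      have e : 2*(m+2)+1 = (2*(m+1)+1)+2 := by ring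
      rw [e]
      have e1 : 2*(m+1)+1 = (2*m+1)+2 := by ring
      linear_combination (x^2+y^2) * h1 - (x*y)^2 * h0

lemma neg_one_pow_congr' (a b : ℕ) (h : a % 2 = b % 2) : (-1:ℚ)^a = (-1)^b := by
  rcases Nat.even_or_odd a with ha | ha
  · have hb : Even b := Nat.even_iff.mpr (by have := Nat.even_iff.mp ha; omega)
    rw [ha.neg_one_pow, hb.neg_one_pow]
  · have hb : Odd b := Nat.odd_iff.mpr (by have := Nat.odd_iff.mp ha; omega)
    rw [ha.neg_one_pow, hb.neg_one_pow]

lemma aux_prod (N : ℕ) : ∀ j, j < N →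
    (∏ l ∈ Finset.Icc 1 j, ((4*(N:ℚ))^2 - (4*(l:ℚ))^2)) * ((N-1-j).factorial : ℚ) * (N:ℚ)
      = 16^j * ((N+j).factorial : ℚ) := by
  intro j
  induction j with
  | zero =>
    intro h
    obtain ⟨a, ha⟩ : ∃ a, N = a + 1 := ⟨N-1, by omega⟩
    subst ha
    rw [show a+1-1-0 = a by omega]
    simp [Nat.factorial_succ]
    ring
  | succ j ih =>
    intro h
    have ih' := ih (by omega)
    rw [Finset.prod_Icc_succ_top (by omega : 1 ≤ j + 1)]
    obtain ⟨a, ha⟩ : ∃ a, N = j+2+a := ⟨N-j-2, by omega⟩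
    rw [show N-1-(j+1) = a by omega, show N+(j+1) = (N+j)+1 by omega, Nat.factorial_succ]
    rw [show N-1-j = a+1 by omega, Nat.factorial_succ] at ih'
    have haq : (N:ℚ) = (j:ℚ)+2+(a:ℚ) := by rw [ha]; push_cast; ring
    push_cast at ih' ⊢
    rw [haq] at ih' ⊢
    linear_combination (16*(2*(j:ℚ)+3+(a:ℚ))) * ih'

lemma aux_c_eq (n : ℕ) (hn : n % 8 = 3) (c : ℕ → ℚ)
    (hc0 : c 0 = -1)
    (hc : ∀ k, 1 ≤ k → k ≤ n / 2 →
      c k = (-1 : ℚ) ^ (k / 2 + (k - 1) % 2) * ((n : ℚ) + 1) *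
        ((n : ℚ) + 1 - 2 * (k : ℚ)) ^ ((k - 1) % 2) *
        (∏ l ∈ Finset.Icc 1 ((k - 1) / 2), (((n : ℚ) + 1) ^ 2 - (4 * (l : ℚ)) ^ 2)) /
        (4 ^ k * (Nat.factorial k : ℚ))) :
    ∀ k ≤ n / 2, c k = ((auxD (n/2) k : ℤ) : ℚ) := by
  obtain ⟨t, ht⟩ : ∃ t, n = 8*t+3 := ⟨n/8, by omega⟩
  have hm : n/2 = 4*t+1 := by omega
  have hnq : (n:ℚ) = 8*(t:ℚ)+3 := by rw [ht]; push_cast; ring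
  intro k hk
  rcases Nat.eq_zero_or_pos k with hk0 | hk1
  · subst hk0
    rw [hc0, hm]
    unfold auxD
    rw [show (4*t+1+1-0)/2 = 2*t+1 by omega, show (4*t+1+0)/2 = 2*t by omega,
        Nat.choose_zero_right]
    push_cast
    rw [pow_succ, pow_mul]
    norm_num
  · rw [hc k hk1 hk, hm]
    rw [hm] at hk
    have hB : ((Nat.factorial k : ℕ) : ℚ) ≠ 0 := Nat.cast_ne_zero.mpr (Nat.factorial_ne_zero _)
    rcases Nat.even_or_odd k with hke | hko
    · -- k = 2j+2
      obtain ⟨j, hj⟩ : ∃ j, k = 2*j+2 := by rcases hke with ⟨a, ha⟩; exact ⟨a-1, by omega⟩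
      subst hj
      obtain ⟨r, hr⟩ : ∃ r, j + r + 1 = 2*t := ⟨2*t-j-1, by omega⟩
      rw [show (2*j+2)/2 + (2*j+2-1)%2 = j+2 by omega, show (2*j+2-1)%2 = 1 by omega,
          pow_one, show (2*j+2-1)/2 = j by omega]
      have hprodeq : (∏ l ∈ Finset.Icc 1 j, (((n:ℚ)+1)^2 - (4*(l:ℚ))^2))
          = ∏ l ∈ Finset.Icc 1 j, ((4*((2*t+1:ℕ):ℚ))^2 - (4*(l:ℚ))^2) := by
        refine Finset.prod_congr rfl fun l _ => ?_
        rw [hnq]; push_cast; ring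
      rw [hprodeq]
      have hP := aux_prod (2*t+1) j (by omega)
      rw [show 2*t+1-1-j = r+1 by omega, Nat.factorial_succ] at hP
      push_cast at hP
      unfold auxD
      rw [show (4*t+1+1-(2*j+2))/2 = r+1 by omega,
          show (4*t+1+(2*j+2))/2 = 2*t+1+j by omega]
      have hch : (((2*t+1+j).choose (2*j+2) : ℕ) : ℚ)
          = ((2*t+1+j).factorial : ℚ) / (((2*j+2).factorial : ℚ) * ((r).factorial : ℚ)) := by
        rw [Nat.cast_choose ℚ (by omega : 2*j+2 ≤ 2*t+1+j), show 2*t+1+j-(2*j+2) = r by omega]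
      have hsgn : (-1:ℚ)^(r+1) = (-1:ℚ)^(j+2) := neg_one_pow_congr' _ _ (by omega)
      push_cast
      rw [hch, hsgn, hnq]
      have hrq : (r:ℚ) = 2*(t:ℚ) - (j:ℚ) - 1 := by
        have : ((j + r + 1 : ℕ) : ℚ) = ((2*t : ℕ) : ℚ) := by rw [hr]
        push_cast at this; linarith
      rw [hrq] at hP
      have h4 : (4:ℚ)^(2*j+2) = 16^j*16 := by
        rw [show 2*j+2 = 2*(j+1) by ring, pow_mul, pow_succ]; norm_num
      rw [h4]
      have hAr : ((r.factorial : ℕ) : ℚ) ≠ 0 := Nat.cast_ne_zero.mpr (Nat.factorial_ne_zero _)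
      have h16 : (16:ℚ)^j ≠ 0 := by positivity
      generalize (∏ l ∈ Finset.Icc 1 j, ((4*(2*(t:ℚ)+1))^2 - (4*(l:ℚ))^2)) = P at hP ⊢
      field_simp
      linear_combination (16:ℚ) * hP
    · -- k = 2j+1
      obtain ⟨j, hj⟩ := hko
      subst hj
      obtain ⟨r, hr⟩ : ∃ r, j + r = 2*t := ⟨2*t-j, by omega⟩
      rw [show (2*j+1)/2 + (2*j+1-1)%2 = j by omega, show (2*j+1-1)%2 = 0 by omega,
          pow_zero, mul_one, show (2*j+1-1)/2 = j by omega]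
      have hprodeq : (∏ l ∈ Finset.Icc 1 j, (((n:ℚ)+1)^2 - (4*(l:ℚ))^2))
          = ∏ l ∈ Finset.Icc 1 j, ((4*((2*t+1:ℕ):ℚ))^2 - (4*(l:ℚ))^2) := by
        refine Finset.prod_congr rfl fun l _ => ?_
        rw [hnq]; push_cast; ring
      rw [hprodeq]
      have hP := aux_prod (2*t+1) j (by omega)
      rw [show 2*t+1-1-j = r by omega] at hP
      push_cast at hP
      unfold auxD
      rw [show (4*t+1+1-(2*j+1))/2 = r by omega,
          show (4*t+1+(2*j+1))/2 = 2*t+1+j by omega]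
      have hch : (((2*t+1+j).choose (2*j+1) : ℕ) : ℚ)
          = ((2*t+1+j).factorial : ℚ) / (((2*j+1).factorial : ℚ) * ((r).factorial : ℚ)) := by
        rw [Nat.cast_choose ℚ (by omega : 2*j+1 ≤ 2*t+1+j), show 2*t+1+j-(2*j+1) = r by omega]
      have hsgn : (-1:ℚ)^r = (-1:ℚ)^j := neg_one_pow_congr' _ _ (by omega)
      push_cast
      rw [hch, hsgn, hnq]
      have h4 : (4:ℚ)^(2*j+1) = 16^j*4 := by
        rw [pow_succ, pow_mul]; norm_num
      rw [h4]
      have hAr : ((r.factorial : ℕ) : ℚ) ≠ 0 := Nat.cast_ne_zero.mpr (Nat.factorial_ne_zero _)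
      have h16 : (16:ℚ)^j ≠ 0 := by positivity
      generalize (∏ l ∈ Finset.Icc 1 j, ((4*(2*(t:ℚ)+1))^2 - (4*(l:ℚ))^2)) = P at hP ⊢
      field_simp
      linear_combination (4:ℚ) * hP

/-- The case `n ≡ 3 (mod 8)` of the Eight Levels Theorem. -/
theorem eight_levels_mod8_three (n : ℕ) (hn : n % 8 = 3) (c : ℕ → ℚ)
    (hc0 : c 0 = -1)
    (hc : ∀ k, 1 ≤ k → k ≤ n / 2 →
      c k = (-1 : ℚ) ^ (k / 2 + (k - 1) % 2) * ((n : ℚ) + 1) *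
        ((n : ℚ) + 1 - 2 * (k : ℚ)) ^ ((k - 1) % 2) *
        (∏ l ∈ Finset.Icc 1 ((k - 1) / 2), (((n : ℚ) + 1) ^ 2 - (4 * (l : ℚ)) ^ 2)) /
        (4 ^ k * (Nat.factorial k : ℚ))) :
    (∀ k ≤ n / 2, ∃ z : ℤ, c k = (z : ℚ)) ∧
    ∀ x y : ℂ, x ^ n + y ^ n =
      (x + y) * ∑ k ∈ Finset.range (n / 2 + 1),
        (c k : ℂ) * (x * y) ^ (n / 2 - k) * (x ^ 2 + y ^ 2) ^ k := by
  have hceq := aux_c_eq n hn c hc0 hc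
  constructor
  · intro k hk
    exact ⟨auxD (n/2) k, hceq k hk⟩
  · intro x y
    have hm : n = 2*(n/2)+1 := by omega
    calc x^n + y^n = x^(2*(n/2)+1) + y^(2*(n/2)+1) := by rw [← hm]
    _ = (x+y) * auxS (n/2) x y := aux_main (n/2) x y
    _ = _ := by
      unfold auxS
      congr 1
      refine Finset.sum_congr rfl fun k hk => ?_
      have h := hceq k (Nat.lt_succ_iff.mp (Finset.mem_range.mp hk))
      rw [h]
      norm_cast
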